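/- Let q be a prime power and A = 𝔽_q[T]. For every monic irreducible polynomial P ∈ A, one has C_{P-1}(1) ≡ 0 (mod P), i.e. P divides C_{P-1}(1) in A. -/

import Mathlib

open Polynomial

open Finset

section CarlitzAux

variable (F : Type) [Field F] [Fintype F]

private lemma carlitz_char :
    ∃ p n : ℕ, p.Prime ∧ Fintype.card F = p ^ n ∧ CharP F p := by
  obtain ⟨p, hp⟩ := CharP.exists F
  haveI := hp
  obtain ⟨n, hpp, hcard⟩ := FiniteField.card F p
  exact ⟨p, n, hpp, hcard, hp⟩

section Frob
variable {R : Type} [CommRing R] [Algebra F R] [Nontrivial R]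

private lemma carlitz_frob_add (x y : R) :
    (x + y) ^ Fintype.card F = x ^ Fintype.card F + y ^ Fintype.card F := by
  obtain ⟨p, n, hpp, hcard, hch⟩ := carlitz_char F
  haveI := hch
  haveI : Fact p.Prime := ⟨hpp⟩
  haveI : CharP R p := charP_of_injective_algebraMap' F p
  rw [hcard, add_pow_char_pow]

private lemma carlitz_frob_sub (x y : R) :
    (x - y) ^ Fintype.card F = x ^ Fintype.card F - y ^ Fintype.card F := by
  obtain ⟨p, n, hpp, hcard, hch⟩ := carlitz_char F
  haveI := hch
  haveI : Fact p.Prime := ⟨hpp⟩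
  haveI : CharP R p := charP_of_injective_algebraMap' F p
  rw [hcard, sub_pow_char_pow]

private lemma carlitz_frob_sum {ι : Type} (s : Finset ι) (f : ι → R) :
    (∑ i ∈ s, f i) ^ Fintype.card F = ∑ i ∈ s, f i ^ Fintype.card F := by
  obtain ⟨p, n, hpp, hcard, hch⟩ := carlitz_char F
  haveI := hch
  haveI : Fact p.Prime := ⟨hpp⟩
  haveI : CharP R p := charP_of_injective_algebraMap' F p
  rw [hcard, sum_pow_char_pow]

end Frob

private noncomputable def bC : ℕ → ℕ → Polynomial F
  | 0, 0 => 1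
  | 0, _ + 1 => 0
  | n + 1, 0 => X * bC n 0
  | n + 1, k + 1 => X * bC n (k + 1) + bC n k ^ Fintype.card F

private lemma bC_zero (n : ℕ) : bC F n 0 = X ^ n := by
  induction n with
  | zero => simp [bC]
  | succ n ih => rw [pow_succ, mul_comm]; simp [bC, ih]

private lemma bC_of_lt : ∀ n k : ℕ, n < k → bC F n k = 0 := by
  intro n
  induction n with
  | zero => rintro (_ | k) h
            · omega
            · simp [bC]
  | succ n ih => rintro (_ | k) h
                 · omega
                 · simp [bC, ih (k + 1) (by omega), ih k (by omega), zero_pow Fintype.card_ne_zero]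

private lemma bC_diag (n : ℕ) : bC F n n = 1 := by
  induction n with
  | zero => simp [bC]
  | succ n ih => simp [bC, ih, bC_of_lt F n (n + 1) (by omega), one_pow]


section CarlitzAux2
variable (F : Type) [Field F] [Fintype F]

private lemma bC_key (n : ℕ) :
    ∀ k : ℕ, (X ^ Fintype.card F ^ (k + 1) - X) * bC F n (k + 1)
      = bC F n k ^ Fintype.card F - bC F n k := by
  induction n with
  | zero =>
    rintro (_ | k) <;>
      simp [bC, zero_pow Fintype.card_ne_zero]
  | succ n ih =>
    rintro (_ | j)
    · have h0 := ih 0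
      rw [pow_one] at h0
      show (X ^ Fintype.card F ^ 1 - X) * (X * bC F n 1 + bC F n 0 ^ Fintype.card F)
          = (X * bC F n 0) ^ Fintype.card F - X * bC F n 0
      rw [pow_one, mul_pow]
      linear_combination (X : Polynomial F) * h0
    · have A1 := ih (j + 1)
      have A2 : ((X ^ Fintype.card F ^ (j + 1) - X) * bC F n (j + 1)) ^ Fintype.card F
          = (bC F n j ^ Fintype.card F - bC F n j) ^ Fintype.card F := by rw [ih j]
      rw [mul_pow, carlitz_frob_sub F, carlitz_frob_sub F, ← pow_mul, ← pow_succ] at A2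
      show (X ^ Fintype.card F ^ (j + 2) - X) * (X * bC F n (j + 2) + bC F n (j + 1) ^ Fintype.card F)
          = (X * bC F n (j + 1) + bC F n j ^ Fintype.card F) ^ Fintype.card F
            - (X * bC F n (j + 1) + bC F n j ^ Fintype.card F)
      rw [carlitz_frob_add F, mul_pow]
      linear_combination (X : Polynomial F) * A1 + A2

end CarlitzAux2

/-- Compositional iterates of the Carlitz polynomial `C_T(x) = T·x + x^q`, so that
`carlitzTpow F n = C_{T^n}(x) ∈ (𝔽_q[T])[x]` (here `q = Fintype.card F`). -/
noncomputable def carlitzTpow (F : Type) [Field F] [Fintype F] : ℕ → Polynomial (Polynomial F)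
  | 0 => X
  | n + 1 => (carlitzTpow F n).comp (Polynomial.C Polynomial.X * X + X ^ (Fintype.card F))

section CarlitzAux3
variable (F : Type) [Field F] [Fintype F]

private lemma carlitzTpow_comp (n : ℕ) :
    (carlitzTpow F n).comp (C X * X + X ^ Fintype.card F)
      = C X * carlitzTpow F n + carlitzTpow F n ^ Fintype.card F := by
  induction n with
  | zero => simp [carlitzTpow]
  | succ n ih =>
    simp only [carlitzTpow]
    conv_lhs => rw [ih]
    simp [add_comp, mul_comp, C_comp, pow_comp]

private lemma carlitzTpow_succ (n : ℕ) :
    carlitzTpow F (n + 1) = C X * carlitzTpow F n + carlitzTpow F n ^ Fintype.card F := by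
  simp only [carlitzTpow]; exact carlitzTpow_comp F n

private noncomputable def eC (n : ℕ) : Polynomial F := (carlitzTpow F n).eval 1

private lemma eC_zero : eC F 0 = 1 := by simp [eC, carlitzTpow]

private lemma eC_succ (n : ℕ) : eC F (n + 1) = X * eC F n + eC F n ^ Fintype.card F := by
  rw [eC, carlitzTpow_succ]
  simp [eC]

private lemma eC_eq_sum (n : ℕ) : eC F n = ∑ k ∈ range (n + 1), bC F n k := by
  induction n with
  | zero => simp [eC_zero, bC]
  | succ n ih =>
    rw [eC_succ, ih, carlitz_frob_sum F, mul_sum]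
    rw [Finset.sum_range_succ' (fun k => bC F (n + 1) k) (n + 1)]
    simp only [bC]
    rw [Finset.sum_add_distrib]
    have h1 : ∑ k ∈ range (n + 2), X * bC F n k
        = ∑ k ∈ range (n + 1), X * bC F n (k + 1) + X * bC F n 0 :=
      Finset.sum_range_succ' _ _
    have h2 : ∑ k ∈ range (n + 2), X * bC F n k = ∑ k ∈ range (n + 1), X * bC F n k := by
      rw [Finset.sum_range_succ, bC_of_lt F n (n + 1) (by omega), mul_zero, add_zero]
    linear_combination h2.symm.trans h1

end CarlitzAux3

section CarlitzAux4
variable (F : Type) [Field F] [Fintype F]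

private lemma carlitz_not_dvd (P : Polynomial F) (hP : P.Monic) (hPirr : Irreducible P)
    {j : ℕ} (hj0 : j ≠ 0) (hjd : j < P.natDegree) :
    ¬ P ∣ (X ^ Fintype.card F ^ j - X : Polynomial F) := by
  intro hdvd
  obtain ⟨p, n, hpp, hcard, hch⟩ := carlitz_char F
  haveI := hch
  haveI : Fact p.Prime := ⟨hpp⟩
  haveI : Fact (Irreducible P) := ⟨hPirr⟩
  set K := AdjoinRoot P with hK
  haveI : CharP K p := charP_of_injective_algebraMap' F p
  haveI : Module.Finite F K := Module.Finite.of_basis (AdjoinRoot.powerBasis hP.ne_zero).basis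
  haveI : Finite K := Module.finite_of_finite F
  letI : Fintype K := Fintype.ofFinite _
  -- every element of K is fixed by x ↦ x ^ q ^ j
  have hfix : ∀ x : K, x ^ Fintype.card F ^ j = x := by
    have hq : ∀ x : K, x ^ Fintype.card F ^ j = iterateFrobenius K p (n * j) x := by
      intro x; rw [iterateFrobenius_def, hcard, ← pow_mul]
    have hcomp : (iterateFrobenius K p (n * j)).comp (AdjoinRoot.mk P) = AdjoinRoot.mk P := by
      apply Polynomial.ringHom_ext
      · intro a
        have : (a : F) ^ Fintype.card F ^ j = a := FiniteField.pow_card_pow j a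
        simp only [RingHom.comp_apply, iterateFrobenius_def]
        rw [pow_mul, ← hcard, ← map_pow, ← C_pow, this]
      · have h0 : AdjoinRoot.mk P (X ^ Fintype.card F ^ j - X) = 0 :=
          AdjoinRoot.mk_eq_zero.mpr hdvd
        rw [map_sub, map_pow, sub_eq_zero] at h0
        simp only [RingHom.comp_apply, iterateFrobenius_def]
        rw [pow_mul, ← hcard]
        exact h0
    intro x
    obtain ⟨g, rfl⟩ := AdjoinRoot.mk_surjective x
    rw [hq, ← RingHom.comp_apply, hcomp]
  -- cardinality of K
  have hcardK : Fintype.card K = Fintype.card F ^ P.natDegree := by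
    rw [Module.card_fintype (AdjoinRoot.powerBasis hP.ne_zero).basis]
    congr 1
    simp [AdjoinRoot.powerBasis]
    convert Fintype.card_fin P.natDegree
    exact Fintype.card_congr (Equiv.refl _)
  have h1q : 1 < Fintype.card F := Fintype.one_lt_card
  -- all of K consists of roots of X ^ q ^ j - X
  have hle : Fintype.card K ≤ Fintype.card F ^ j := by
    have hne : (X ^ Fintype.card F ^ j - X : K[X]) ≠ 0 :=
      FiniteField.X_pow_card_pow_sub_X_ne_zero K hj0 h1q
    have hsub : (Finset.univ : Finset K) ⊆ (X ^ Fintype.card F ^ j - X : K[X]).roots.toFinset := by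
      intro x _
      rw [Multiset.mem_toFinset, mem_roots hne]
      simp [IsRoot, hfix x]
    calc Fintype.card K = (Finset.univ : Finset K).card := (Finset.card_univ).symm
      _ ≤ (X ^ Fintype.card F ^ j - X : K[X]).roots.toFinset.card := Finset.card_le_card hsub
      _ ≤ Multiset.card (X ^ Fintype.card F ^ j - X : K[X]).roots := Multiset.toFinset_card_le _
      _ ≤ (X ^ Fintype.card F ^ j - X : K[X]).natDegree := Polynomial.card_roots' _
      _ = Fintype.card F ^ j := FiniteField.X_pow_card_pow_sub_X_natDegree_eq K hj0 h1q
  rw [hcardK] at hle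
  have := (Nat.pow_le_pow_iff_right h1q).mp hle
  omega

end CarlitzAux4

/-- The Carlitz module polynomial `C_m(x) ∈ (𝔽_q[T])[x]` for `m ∈ A = 𝔽_q[T]`:
it is determined by `𝔽_q`-linearity in `m` together with
`C_{T^n}(x) = C_T(C_T(⋯ C_T(x)⋯))` (`n`-fold composition of `C_T(x) = T·x + x^q`). -/
noncomputable def carlitz (F : Type) [Field F] [Fintype F] (m : Polynomial F) :
    Polynomial (Polynomial F) :=
  m.sum fun i c => Polynomial.C (Polynomial.C c) * carlitzTpow F i

/-- Evaluation `C_m(α) ∈ 𝔽_q[T]` of the Carlitz polynomial `C_m(x)` at `α ∈ 𝔽_q[T]`. -/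
noncomputable def carlitzEval (F : Type) [Field F] [Fintype F] (m α : Polynomial F) :
    Polynomial F :=
  (carlitz F m).eval α

section CarlitzAux5
variable (F : Type) [Field F] [Fintype F]

private noncomputable def aC (P : Polynomial F) (k : ℕ) : Polynomial F :=
  ∑ i ∈ range (P.natDegree + 1), C (P.coeff i) * bC F i k

private lemma aC_zero (P : Polynomial F) : aC F P 0 = P := by
  simp only [aC, bC_zero]
  exact (P.as_sum_range_C_mul_X_pow).symm

private lemma aC_key (P : Polynomial F) (k : ℕ) :
    (X ^ Fintype.card F ^ (k + 1) - X) * aC F P (k + 1)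
      = aC F P k ^ Fintype.card F - aC F P k := by
  have hpow : aC F P k ^ Fintype.card F
      = ∑ i ∈ range (P.natDegree + 1), C (P.coeff i) * bC F i k ^ Fintype.card F := by
    rw [aC, carlitz_frob_sum F]
    refine Finset.sum_congr rfl fun i _ => ?_
    rw [mul_pow, ← C_pow, FiniteField.pow_card]
  rw [hpow, aC, aC, Finset.mul_sum, ← Finset.sum_sub_distrib]
  refine Finset.sum_congr rfl fun i _ => ?_
  rw [mul_left_comm, bC_key F i k, mul_sub]

private lemma aC_top (P : Polynomial F) (hP : P.Monic) : aC F P P.natDegree = 1 := by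
  rw [aC, Finset.sum_eq_single_of_mem P.natDegree (Finset.self_mem_range_succ P.natDegree)]
  · rw [bC_diag, hP.coeff_natDegree, map_one, mul_one]
  · intro i hi hne
    rw [bC_of_lt F i P.natDegree (by rw [Finset.mem_range] at hi; omega), mul_zero]

end CarlitzAux5

/-- For every monic irreducible `P ∈ 𝔽_q[T]`, one has `C_{P-1}(1) ≡ 0 (mod P)`. -/
theorem carlitz_fermat_little_one (F : Type) [Field F] [Fintype F]
    (P : Polynomial F) (hP : P.Monic) (hPirr : Irreducible P) :
    P ∣ carlitzEval F (P - 1) 1 := by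
  classical
  have hprime : Prime P := hPirr.prime
  have hdvd : ∀ k, k < P.natDegree → P ∣ aC F P k := by
    intro k
    induction k with
    | zero => intro _; rw [aC_zero]
    | succ k ih =>
      intro hlt
      have hk : P ∣ aC F P k := ih (by omega)
      have h1 : P ∣ (X ^ Fintype.card F ^ (k + 1) - X) * aC F P (k + 1) := by
        rw [aC_key F P k]
        exact (dvd_pow hk Fintype.card_ne_zero).sub hk
      rcases hprime.2.2 _ _ h1 with h | h
      · exact absurd h (carlitz_not_dvd F P hP hPirr (Nat.succ_ne_zero k) hlt)
      · exact h
  have hdeg : (P - 1).natDegree < P.natDegree + 1 := by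
    have h := Polynomial.natDegree_sub_le P 1
    simp only [natDegree_one, Nat.max_eq_left (Nat.zero_le _)] at h
    omega
  have hsum : carlitzEval F (P - 1) 1
      = ∑ i ∈ range (P.natDegree + 1), C ((P - 1).coeff i) * eC F i := by
    unfold carlitzEval carlitz
    rw [Polynomial.sum_over_range' (P - 1) (fun n => by simp) (P.natDegree + 1) hdeg,
      eval_finset_sum]
    refine Finset.sum_congr rfl fun i _ => ?_
    rw [eval_mul, eval_C, eC]
  have hsplit : carlitzEval F (P - 1) 1
      = (∑ i ∈ range (P.natDegree + 1), C (P.coeff i) * eC F i) - 1 := by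
    rw [hsum]
    have hcongr : ∀ i ∈ range (P.natDegree + 1), C ((P - 1).coeff i) * eC F i
        = C (P.coeff i) * eC F i - (if i = 0 then eC F 0 else 0) := by
      intro i _
      rcases Nat.eq_zero_or_pos i with rfl | hi
      · simp [coeff_sub, coeff_one, sub_mul, map_sub]
      · have hne : i ≠ 0 := by omega
        simp [coeff_sub, coeff_one, hne]
    rw [Finset.sum_congr rfl hcongr, Finset.sum_sub_distrib,
      Finset.sum_ite_eq' (range (P.natDegree + 1)) 0 (fun _ => eC F 0)]
    simp [eC_zero]
  have hswap : ∑ i ∈ range (P.natDegree + 1), C (P.coeff i) * eC F i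
      = ∑ k ∈ range (P.natDegree + 1), aC F P k := by
    have heC : ∀ i ∈ range (P.natDegree + 1), C (P.coeff i) * eC F i
        = ∑ k ∈ range (P.natDegree + 1), C (P.coeff i) * bC F i k := by
      intro i hi
      rw [Finset.mem_range] at hi
      rw [eC_eq_sum, Finset.mul_sum]
      apply Finset.sum_subset
      · exact Finset.range_subset_range.mpr (by omega)
      · intro k hk hnk
        rw [Finset.mem_range] at hk
        rw [Finset.mem_range] at hnk
        rw [bC_of_lt F i k (by omega), mul_zero]
    rw [Finset.sum_congr rfl heC, Finset.sum_comm]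
    rfl
  rw [hsplit, hswap, Finset.sum_range_succ, aC_top F P hP, add_sub_cancel_right]
  exact Finset.dvd_sum fun k hk => hdvd k (Finset.mem_range.mp hk)
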